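/- In the tabular softmax trajectory model, fix logits z : 𝒮 × 𝒜 → ℝ, a direction v : 𝒮 × 𝒜 → ℝ, and a nonempty event E ⊆ 𝒜^T. Then, as η → 0, E_{P_{z+ηv}}[ℓ_{z+ηv} − ℓ_z | E] = −η·E_{P_z}[(1/T)·Ψ_{z,v} | E] + O(η²). -/

import Mathlib

open Finset Filter Asymptotics

noncomputable section

/-- Softmax policy: probability of action `a` in state `s` under logits `z`. -/
def pol {S A : Type*} [Fintype A] (z : S × A → ℝ) (s : S) (a : A) : ℝ :=
  Real.exp (z (s, a)) / ∑ b : A, Real.exp (z (s, b))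

/-- State reached after `n` steps of the deterministic dynamics `δ` from `s0`,
taking actions `y 0, y 1, …`. -/
def stateAt {S A : Type*} (δ : S → A → S) (s0 : S) (y : ℕ → A) : ℕ → S
  | 0 => s0
  | n + 1 => δ (stateAt δ s0 y n) (y n)

/-- State `s_t(y)` from which the `t`-th action of the trajectory `y` is taken. -/
def st {S A : Type*} (δ : S → A → S) (s0 : S) {T : ℕ} (y : Fin T → A) (t : Fin T) : S :=
  stateAt δ s0 (fun n => if h : n < T then y ⟨n, h⟩ else y t) t.val

/-- Trajectory probability `P_z(y) = ∏_t π_z(a_t | s_t(y))`. -/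
def traj {S A : Type*} [Fintype A] (δ : S → A → S) (s0 : S) {T : ℕ}
    (z : S × A → ℝ) (y : Fin T → A) : ℝ :=
  ∏ t : Fin T, pol z (st δ s0 y t) (y t)

/-- Per-token negative log-likelihood `ℓ_z(y)`. -/
def nll {S A : Type*} [Fintype A] (δ : S → A → S) (s0 : S) {T : ℕ}
    (z : S × A → ℝ) (y : Fin T → A) : ℝ :=
  -(1 / (T : ℝ)) * ∑ t : Fin T, Real.log (pol z (st δ s0 y t) (y t))

/-- Centered direction `ṽ_z(s,a) = v(s,a) − ∑_b π_z(b|s) v(s,b)`. -/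
def centered {S A : Type*} [Fintype A] (z v : S × A → ℝ) (s : S) (a : A) : ℝ :=
  v (s, a) - ∑ b : A, pol z s b * v (s, b)

/-- Trajectory score `Ψ_{z,v}(y) = ∑_t ṽ_z(s_t(y), a_t)`. -/
def score {S A : Type*} [Fintype A] (δ : S → A → S) (s0 : S) {T : ℕ}
    (z v : S × A → ℝ) (y : Fin T → A) : ℝ :=
  ∑ t : Fin T, centered z v (st δ s0 y t) (y t)

/-- Conditional expectation `E_{P_z}[f | E]`. -/
def condExp {S A : Type*} [Fintype A] (δ : S → A → S) (s0 : S) {T : ℕ}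
    (z : S × A → ℝ) (E : Finset (Fin T → A)) (f : (Fin T → A) → ℝ) : ℝ :=
  (∑ y ∈ E, traj δ s0 z y * f y) / ∑ y ∈ E, traj δ s0 z y

/-- Conditional covariance `Cov_{P_z(·|E)}(f, g)`. -/
def condCov {S A : Type*} [Fintype A] (δ : S → A → S) (s0 : S) {T : ℕ}
    (z : S × A → ℝ) (E : Finset (Fin T → A)) (f g : (Fin T → A) → ℝ) : ℝ :=
  condExp δ s0 z E (fun y => f y * g y) - condExp δ s0 z E f * condExp δ s0 z E g

section Aux

variable {S A : Type*} [Fintype A] [Nonempty A]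

lemma den_pos (z : S × A → ℝ) (s : S) : 0 < ∑ b : A, Real.exp (z (s, b)) :=
  Finset.sum_pos (fun b _ => Real.exp_pos _) Finset.univ_nonempty

lemma pol_pos (z : S × A → ℝ) (s : S) (a : A) : 0 < pol z s a :=
  div_pos (Real.exp_pos _) (den_pos z s)

lemma traj_pos (δ : S → A → S) (s0 : S) {T : ℕ} (z : S × A → ℝ) (y : Fin T → A) :
    0 < traj δ s0 z y :=
  Finset.prod_pos fun _ _ => pol_pos z _ _

lemma zero_smul_add (z v : S × A → ℝ) : z + (0 : ℝ) • v = z := by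
  simp

lemma pol_apply (z v : S × A → ℝ) (η : ℝ) (s : S) (a : A) :
    pol (z + η • v) s a =
      Real.exp (z (s, a) + η * v (s, a)) / ∑ b : A, Real.exp (z (s, b) + η * v (s, b)) := by
  simp [pol, Pi.add_apply, Pi.smul_apply, smul_eq_mul]

lemma sum_pol_mul (z : S × A → ℝ) (s : S) (v : S × A → ℝ) :
    ∑ b : A, pol z s b * v (s, b) =
      (∑ b : A, Real.exp (z (s, b)) * v (s, b)) / ∑ b : A, Real.exp (z (s, b)) := by
  rw [Finset.sum_div]
  exact Finset.sum_congr rfl fun b _ => by rw [pol, div_mul_eq_mul_div]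

/-! ### Derivatives in `η` at `0` -/

lemma hasDerivAt_expterm (z v : S × A → ℝ) (p : S × A) :
    HasDerivAt (fun η : ℝ => Real.exp (z p + η * v p)) (v p * Real.exp (z p)) 0 := by
  have h : HasDerivAt (fun η : ℝ => z p + η * v p) (v p) 0 := by
    simpa using ((hasDerivAt_id (0 : ℝ)).mul_const (v p)).const_add (z p)
  simpa [mul_comm] using h.exp

lemma hasDerivAt_den (z v : S × A → ℝ) (s : S) :
    HasDerivAt (fun η : ℝ => ∑ b : A, Real.exp (z (s, b) + η * v (s, b)))
      (∑ b : A, v (s, b) * Real.exp (z (s, b))) 0 :=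
  HasDerivAt.fun_sum fun b _ => hasDerivAt_expterm z v (s, b)

lemma hasDerivAt_pol (z v : S × A → ℝ) (s : S) (a : A) :
    HasDerivAt (fun η : ℝ => pol (z + η • v) s a) (pol z s a * centered z v s a) 0 := by
  have hden := hasDerivAt_den z v s
  have hd0 : (fun η : ℝ => ∑ b : A, Real.exp (z (s, b) + η * v (s, b))) 0 ≠ 0 := by
    have := den_pos z s
    simpa using this.ne'
  have h := (hasDerivAt_expterm z v (s, a)).fun_div hden hd0
  have e : (fun η : ℝ => pol (z + η • v) s a) =
      fun η => Real.exp (z (s, a) + η * v (s, a)) / ∑ b : A, Real.exp (z (s, b) + η * v (s, b)) :=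
    funext fun η => pol_apply z v η s a
  rw [e]
  refine h.congr_deriv (Eq.symm ?_)
  have hD := (den_pos z s).ne'
  rw [pol, centered, sum_pol_mul]
  simp only [zero_mul, add_zero]
  rw [show (∑ b : A, v (s, b) * Real.exp (z (s, b)))
      = ∑ b : A, Real.exp (z (s, b)) * v (s, b) from
    Finset.sum_congr rfl fun b _ => mul_comm _ _]
  field_simp

lemma hasDerivAt_logpol (z v : S × A → ℝ) (s : S) (a : A) :
    HasDerivAt (fun η : ℝ => Real.log (pol (z + η • v) s a)) (centered z v s a) 0 := by
  have hne : (fun η : ℝ => pol (z + η • v) s a) 0 ≠ 0 := by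
    simp only [zero_smul_add]
    exact (pol_pos z s a).ne'
  have h := (hasDerivAt_pol z v s a).log hne
  convert h using 1
  simp only [zero_smul_add]
  field_simp [(pol_pos z s a).ne']

lemma hasDerivAt_nll (δ : S → A → S) (s0 : S) {T : ℕ} (z v : S × A → ℝ) (y : Fin T → A) :
    HasDerivAt (fun η : ℝ => nll δ s0 (z + η • v) y)
      (-(1 / (T : ℝ)) * score δ s0 z v y) 0 := by
  have h := (HasDerivAt.sum (u := Finset.univ)
      fun t _ => hasDerivAt_logpol z v (st δ s0 y t) (y t)).const_mul (-(1 / (T : ℝ)))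
  simpa [nll, score] using h

lemma traj_eq_exp (δ : S → A → S) (s0 : S) {T : ℕ} (z : S × A → ℝ) (y : Fin T → A) :
    traj δ s0 z y = Real.exp (∑ t : Fin T, Real.log (pol z (st δ s0 y t) (y t))) := by
  rw [Real.exp_sum]
  exact Finset.prod_congr rfl fun t _ => (Real.exp_log (pol_pos _ _ _)).symm

lemma hasDerivAt_traj (δ : S → A → S) (s0 : S) {T : ℕ} (z v : S × A → ℝ) (y : Fin T → A) :
    HasDerivAt (fun η : ℝ => traj δ s0 (z + η • v) y)
      (traj δ s0 z y * score δ s0 z v y) 0 := by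
  have h := (HasDerivAt.fun_sum (u := Finset.univ)
      fun t _ => hasDerivAt_logpol z v (st δ s0 y t) (y t)).exp
  have e : (fun η : ℝ => traj δ s0 (z + η • v) y) =
      fun η => Real.exp (∑ t : Fin T, Real.log (pol (z + η • v) (st δ s0 y t) (y t))) :=
    funext fun η => traj_eq_exp δ s0 (z + η • v) y
  rw [e]
  convert h using 1
  rw [traj_eq_exp δ s0 z y, score]
  simp [zero_smul_add]

/-! ### Analyticity in `η` at `0` -/

lemma analyticAt_log_comp {f : ℝ → ℝ} {x : ℝ} (hf : AnalyticAt ℝ f x) (h : f x ≠ 0) :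
    AnalyticAt ℝ (fun y => Real.log (f y)) x :=
  (((Real.contDiffAt_log (n := (⊤ : WithTop ℕ∞))).2 h).analyticAt).comp hf

lemma analyticAt_expterm (z v : S × A → ℝ) (p : S × A) :
    AnalyticAt ℝ (fun η : ℝ => Real.exp (z p + η * v p)) 0 :=
  (analyticAt_const.add (analyticAt_id.mul analyticAt_const)).rexp

lemma analyticAt_pol (z v : S × A → ℝ) (s : S) (a : A) :
    AnalyticAt ℝ (fun η : ℝ => pol (z + η • v) s a) 0 := by
  have hnum := analyticAt_expterm z v (s, a)
  have hden : AnalyticAt ℝ (fun η : ℝ => ∑ b : A, Real.exp (z (s, b) + η * v (s, b))) 0 :=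
    Finset.analyticAt_fun_sum _ fun b _ => analyticAt_expterm z v (s, b)
  have hd0 : (fun η : ℝ => ∑ b : A, Real.exp (z (s, b) + η * v (s, b))) 0 ≠ 0 := by
    have := den_pos z s
    simpa using this.ne'
  have h := hnum.div hden hd0
  have e : (fun η : ℝ => pol (z + η • v) s a) =
      fun η => Real.exp (z (s, a) + η * v (s, a)) / ∑ b : A, Real.exp (z (s, b) + η * v (s, b)) :=
    funext fun η => pol_apply z v η s a
  rw [e]; exact h

lemma analyticAt_logpol (z v : S × A → ℝ) (s : S) (a : A) :
    AnalyticAt ℝ (fun η : ℝ => Real.log (pol (z + η • v) s a)) 0 := by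
  refine analyticAt_log_comp (analyticAt_pol z v s a) ?_
  simp only [zero_smul_add]
  exact (pol_pos z s a).ne'

lemma analyticAt_traj (δ : S → A → S) (s0 : S) {T : ℕ} (z v : S × A → ℝ) (y : Fin T → A) :
    AnalyticAt ℝ (fun η : ℝ => traj δ s0 (z + η • v) y) 0 :=
  Finset.analyticAt_fun_prod _ fun t _ => analyticAt_pol z v (st δ s0 y t) (y t)

lemma analyticAt_nlldiff (δ : S → A → S) (s0 : S) {T : ℕ} (z v : S × A → ℝ) (y : Fin T → A) :
    AnalyticAt ℝ (fun η : ℝ => nll δ s0 (z + η • v) y - nll δ s0 z y) 0 := by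
  have h : AnalyticAt ℝ
      (fun η : ℝ => ∑ t : Fin T, Real.log (pol (z + η • v) (st δ s0 y t) (y t))) 0 :=
    Finset.analyticAt_fun_sum _ fun t _ => analyticAt_logpol z v (st δ s0 y t) (y t)
  exact ((analyticAt_const.mul h).sub analyticAt_const : AnalyticAt ℝ
    (fun η : ℝ => -(1 / (T : ℝ)) * (∑ t : Fin T, Real.log (pol (z + η • v) (st δ s0 y t) (y t)))
      - nll δ s0 z y) 0)

end Aux

/-- Term (A): as `η → 0`,
`E_{P_{z+ηv}}[ℓ_{z+ηv} − ℓ_z | E] = −η·E_{P_z}[(1/T)·Ψ_{z,v} | E] + O(η²)`. -/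
theorem stmt_9 {S A : Type*} [Fintype S] [Fintype A] [Nonempty A]
    (δ : S → A → S) (s0 : S) (T : ℕ) (hT : 1 ≤ T)
    (z v : S × A → ℝ) (E : Finset (Fin T → A)) (hE : E.Nonempty) :
    (fun η : ℝ =>
        condExp δ s0 (z + η • v) E
          (fun y => nll δ s0 (z + η • v) y - nll δ s0 z y)
        + η * condExp δ s0 z E (fun y => (1 / (T : ℝ)) * score δ s0 z v y))
      =O[nhds (0 : ℝ)] (fun η : ℝ => η ^ 2) := by
  classical
  set K : ℝ := condExp δ s0 z E (fun y => (1 / (T : ℝ)) * score δ s0 z v y) with hK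
  set F : ℝ → ℝ := fun η => condExp δ s0 (z + η • v) E
      (fun y => nll δ s0 (z + η • v) y - nll δ s0 z y) with hFdef
  have hD0 : 0 < ∑ y ∈ E, traj δ s0 z y :=
    Finset.sum_pos (fun y _ => traj_pos δ s0 z y) hE
  -- F 0 = 0
  have hF0 : F 0 = 0 := by
    simp [hFdef, condExp, zero_smul_add]
  -- F is the quotient N/D
  have hFeq : F = fun η =>
      (∑ y ∈ E, traj δ s0 (z + η • v) y * (nll δ s0 (z + η • v) y - nll δ s0 z y)) /
        ∑ y ∈ E, traj δ s0 (z + η • v) y := by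
    funext η; rfl
  -- derivative of F at 0
  have hN : HasDerivAt
      (fun η : ℝ => ∑ y ∈ E, traj δ s0 (z + η • v) y * (nll δ s0 (z + η • v) y - nll δ s0 z y))
      (∑ y ∈ E, traj δ s0 z y * (-(1 / (T : ℝ)) * score δ s0 z v y)) 0 := by
    refine HasDerivAt.fun_sum fun y _ => ?_
    have h := (hasDerivAt_traj δ s0 z v y).fun_mul
      ((hasDerivAt_nll δ s0 z v y).sub_const (nll δ s0 z y))
    refine h.congr_deriv (Eq.symm ?_)
    simp [zero_smul_add]
  have hD : HasDerivAt (fun η : ℝ => ∑ y ∈ E, traj δ s0 (z + η • v) y)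
      (∑ y ∈ E, traj δ s0 z y * score δ s0 z v y) 0 :=
    HasDerivAt.fun_sum fun y _ => hasDerivAt_traj δ s0 z v y
  have hDne : (fun η : ℝ => ∑ y ∈ E, traj δ s0 (z + η • v) y) 0 ≠ 0 := by
    simp only [zero_smul_add]
    exact hD0.ne'
  have hFd : HasDerivAt F (-K) 0 := by
    have h := hN.fun_div hD hDne
    rw [hFeq]
    refine h.congr_deriv (Eq.symm ?_)
    have hc0 : (∑ y ∈ E, traj δ s0 z y * (nll δ s0 z y - nll δ s0 z y)) = 0 := by
      simp
    simp only [zero_smul_add, hc0, zero_mul, sub_zero]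
    rw [hK, condExp]
    have hsum : (∑ y ∈ E, traj δ s0 z y * (-(1 / (T : ℝ)) * score δ s0 z v y))
        = -∑ y ∈ E, traj δ s0 z y * (1 / (T : ℝ) * score δ s0 z v y) := by
      rw [← Finset.sum_neg_distrib]
      exact Finset.sum_congr rfl fun y _ => by ring
    rw [hsum]
    have hD0' : (∑ y ∈ E, traj δ s0 z y) ≠ 0 := hD0.ne'
    field_simp
  -- analyticity of F at 0
  have hFa : AnalyticAt ℝ F 0 := by
    rw [hFeq]
    refine AnalyticAt.div ?_ ?_ hDne
    · exact Finset.analyticAt_fun_sum _ fun y _ =>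
        (analyticAt_traj δ s0 z v y).mul (analyticAt_nlldiff δ s0 z v y)
    · exact Finset.analyticAt_fun_sum _ fun y _ => analyticAt_traj δ s0 z v y
  obtain ⟨p, hp⟩ := hFa
  have h1 : (p 1 fun _ => (1 : ℝ)) = -K := hp.hasDerivAt.unique hFd
  have big := hp.isBigO_sub_partialSum_pow 2
  have hfun : ∀ η : ℝ, F (0 + η) - p.partialSum 2 η = F η + η * K := by
    intro η
    rw [zero_add]
    have hps : p.partialSum 2 η = (p 0 fun _ => η) + (p 1 fun _ => η) := by
      simp [FormalMultilinearSeries.partialSum, Finset.sum_range_succ]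
    have h0 : (p 0 fun _ => η) = F 0 := hp.coeff_zero _
    have hη : (p 1 fun _ => η) = η * (-K) := by
      have hc : p.coeff 1 = -K := h1
      rw [p.apply_eq_pow_smul_coeff, pow_one, smul_eq_mul, hc]
    rw [hps, h0, hF0, hη]
    ring
  have := big.congr (f₂ := fun η : ℝ => F η + η * K) (g₂ := fun η : ℝ => η ^ 2)
    hfun (fun η => by rw [Real.norm_eq_abs, sq_abs])
  exact this
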